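/- arXiv:2104.07156 — 4 statements merged into one kernel-verified Lean document; each statement's English description precedes it below -/
import Mathlib

section
/- Let k be a field of characteristic zero. If f ∈ k[τ][[y₁,…,y_r,z]] is a formal power series in variables y = (y₁,…,y_r) and z with polynomial coefficients in indeterminates τ = (τ₁,…,τ_s), written f = Σ_n c_n(y) zⁿ, and there exists d ≥ 1 with c_i(0) = 0 for i < d and c_d(0) = 1, then there exist a unit u ∈ k[τ][[y,z]] and coefficients a₁,…,a_d ∈ k[τ][[y]] with a_i(0) = 0 such that f = u · (z^d + Σ_{i=1}^d a_i(y) z^{d-i}). In particular the Weierstrass polynomial of f has coefficients again in k[τ][[y]]. -/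
noncomputable section

open Finset (antidiagonal mem_antidiagonal)

namespace WPaux

variable {R : Type*} [CommRing R] {σ : Type*}

/-- Drop the first `d` coefficients of a power series. -/
def shiftd (d : ℕ) (φ : PowerSeries R) : PowerSeries R :=
  PowerSeries.mk fun n => PowerSeries.coeff (n + d) φ

@[simp] lemma coeff_shiftd (d n : ℕ) (φ : PowerSeries R) :
    PowerSeries.coeff n (shiftd d φ) = PowerSeries.coeff (n + d) φ :=
  PowerSeries.coeff_mk _ _

/-- The inverse-like series, defined by recursion on monomials. -/
def Vaux (d : ℕ) (gi : PowerSeries R) (F : (σ →₀ ℕ) → PowerSeries R) :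
    (σ →₀ ℕ) → PowerSeries R
  | m =>
    letI := Classical.decEq σ
    if m = 0 then gi
    else
      -(gi * shiftd d (∑ x ∈ Finset.HasAntidiagonal.antidiagonal m,
          if _ : x.2 < m then F x.1 * Vaux d gi F x.2 else 0))
termination_by m => m

theorem Vaux_eq [DecidableEq σ] (d : ℕ) (gi : PowerSeries R)
    (F : (σ →₀ ℕ) → PowerSeries R) (m : σ →₀ ℕ) :
    Vaux d gi F m =
      if m = 0 then gi
      else
        -(gi * shiftd d (∑ x ∈ Finset.HasAntidiagonal.antidiagonal m,
            if x.2 < m then F x.1 * Vaux d gi F x.2 else 0)) := by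
  cases Subsingleton.elim ‹DecidableEq σ› (Classical.decEq σ)
  rw [Vaux]
  simp only [dite_eq_ite]

theorem main {R : Type*} [CommRing R] {σ : Type*} (d : ℕ) (hd : 1 ≤ d)
    (f : PowerSeries (MvPowerSeries σ R))
    (hlow : ∀ i < d, MvPowerSeries.constantCoeff (PowerSeries.coeff i f) = 0)
    (hd1 : MvPowerSeries.constantCoeff (PowerSeries.coeff d f) = 1) :
    ∃ (u : (PowerSeries (MvPowerSeries σ R))ˣ) (a : Fin d → MvPowerSeries σ R),
      (∀ i, MvPowerSeries.constantCoeff (a i) = 0) ∧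
      f = (u : PowerSeries (MvPowerSeries σ R)) *
        (PowerSeries.X ^ d +
          ∑ i : Fin d, PowerSeries.C (a i) * PowerSeries.X ^ (d - 1 - (i : ℕ))) := by
  classical
  set Fb : (σ →₀ ℕ) → PowerSeries R :=
    fun m => PowerSeries.mk fun n =>
      MvPowerSeries.coeff m (PowerSeries.coeff n f) with hFb
  set g : PowerSeries R := shiftd d (Fb 0) with hgdef
  have hg : PowerSeries.constantCoeff g = ((1 : Rˣ) : R) := by
    rw [← PowerSeries.coeff_zero_eq_constantCoeff_apply, hgdef, coeff_shiftd, hFb,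
      PowerSeries.coeff_mk, MvPowerSeries.coeff_zero_eq_constantCoeff_apply, zero_add, hd1,
      Units.val_one]
  set gi : PowerSeries R := PowerSeries.invOfUnit g 1 with hgidef
  have hggi : g * gi = 1 := PowerSeries.mul_invOfUnit g 1 hg
  have hFb0 : Fb 0 = PowerSeries.X ^ d * g := by
    ext n
    rw [PowerSeries.coeff_X_pow_mul']
    split_ifs with h
    · rw [hgdef, coeff_shiftd, Nat.sub_add_cancel h]
    · rw [hFb, PowerSeries.coeff_mk, MvPowerSeries.coeff_zero_eq_constantCoeff_apply]
      exact hlow n (by omega)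
  set V : (σ →₀ ℕ) → PowerSeries R := Vaux d gi Fb with hVdef
  set v : PowerSeries (MvPowerSeries σ R) :=
    PowerSeries.mk fun n => fun m => PowerSeries.coeff n (V m) with hvdef
  have hveq : ∀ (n : ℕ) (m : σ →₀ ℕ),
      MvPowerSeries.coeff m (PowerSeries.coeff n v) =
        PowerSeries.coeff n (V m) := by
    intro n m
    rw [hvdef]
    have h := PowerSeries.coeff_mk (R := MvPowerSeries σ R) n
      (fun n => (fun m => PowerSeries.coeff n (V m) : MvPowerSeries σ R))
    exact (congrArg (MvPowerSeries.coeff m) h).trans rfl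
  have hV0 : V 0 = gi := by rw [hVdef, Vaux_eq, if_pos rfl]
  -- the key swap lemma
  have hS : ∀ (n : ℕ) (m : σ →₀ ℕ),
      MvPowerSeries.coeff m (PowerSeries.coeff n (f * v)) =
        PowerSeries.coeff n (∑ x ∈ Finset.HasAntidiagonal.antidiagonal m, Fb x.1 * V x.2) := by
    intro n m
    rw [PowerSeries.coeff_mul, map_sum, map_sum]
    simp only [MvPowerSeries.coeff_mul, PowerSeries.coeff_mul]
    rw [Finset.sum_comm]
    refine Finset.sum_congr rfl fun x _ => Finset.sum_congr rfl fun q _ => ?_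
    rw [hveq, hFb, PowerSeries.coeff_mk]
  have hS0 : (∑ x ∈ Finset.HasAntidiagonal.antidiagonal (0 : σ →₀ ℕ), Fb x.1 * V x.2) = PowerSeries.X ^ d := by
    rw [Finsupp.antidiagonal_zero, Finset.sum_singleton, hV0, hFb0, mul_assoc, hggi, mul_one]
  have key : ∀ m : σ →₀ ℕ, m ≠ 0 → ∀ n : ℕ,
      PowerSeries.coeff (n + d) (∑ x ∈ Finset.HasAntidiagonal.antidiagonal m, Fb x.1 * V x.2) = 0 := by
    intro m hm n
    have hmem : ((0 : σ →₀ ℕ), m) ∈ Finset.HasAntidiagonal.antidiagonal m := by rw [Finset.HasAntidiagonal.mem_antidiagonal, zero_add]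
    set W : PowerSeries R :=
      ∑ x ∈ Finset.HasAntidiagonal.antidiagonal m, if x.2 < m then Fb x.1 * V x.2 else 0 with hW
    have hlt : ∀ x ∈ (Finset.HasAntidiagonal.antidiagonal m).erase ((0 : σ →₀ ℕ), m), x.2 < m := by
      rintro ⟨i, j⟩ hx
      rw [Finset.mem_erase, Finset.HasAntidiagonal.mem_antidiagonal] at hx
      obtain ⟨hne, hsum⟩ := hx
      subst hsum
      refine lt_of_le_of_ne le_add_self fun hEq => hne ?_
      have hi : i = 0 := by
        ext t
        have h2 := DFunLike.congr_fun hEq t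
        simp only [Finsupp.coe_add, Pi.add_apply] at h2
        simp only [Finsupp.coe_zero, Pi.zero_apply]
        omega
      simp [hi]
    have hsplit : (∑ x ∈ Finset.HasAntidiagonal.antidiagonal m, Fb x.1 * V x.2) = Fb 0 * V m + W := by
      rw [hW, ← Finset.insert_erase hmem,
        Finset.sum_insert (Finset.notMem_erase _ _),
        Finset.sum_insert (Finset.notMem_erase _ _), if_neg (lt_irrefl m)]
      rw [zero_add]
      exact congrArg _ (Finset.sum_congr rfl fun x hx => (if_pos (hlt x hx)).symm)
    have hVm : V m = -(gi * shiftd d W) := by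
      rw [hVdef, Vaux_eq, if_neg hm]
    have hgVm : g * V m = -(shiftd d W) := by
      rw [hVm, mul_neg, ← mul_assoc, hggi, one_mul]
    rw [hsplit, map_add, hFb0, mul_assoc, PowerSeries.coeff_X_pow_mul, hgVm, map_neg,
      coeff_shiftd, neg_add_cancel]
  have hp_d : PowerSeries.coeff d (f * v) = 1 := by
    apply MvPowerSeries.ext
    intro m
    rw [hS]
    by_cases hm : m = 0
    · subst hm
      rw [hS0, PowerSeries.coeff_X_pow, if_pos rfl, MvPowerSeries.coeff_one, if_pos rfl]
    · have h0 := key m hm 0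
      rw [zero_add] at h0
      rw [h0, MvPowerSeries.coeff_one, if_neg hm]
  have hp_high : ∀ n : ℕ, d < n → PowerSeries.coeff n (f * v) = 0 := by
    intro n hn
    apply MvPowerSeries.ext
    intro m
    rw [hS, map_zero]
    by_cases hm : m = 0
    · subst hm
      rw [hS0, PowerSeries.coeff_X_pow, if_neg (by omega)]
    · obtain ⟨n', rfl⟩ : ∃ n', n = n' + d := ⟨n - d, by omega⟩
      exact key m hm n'
  have hp_low : ∀ n : ℕ, n < d →
      MvPowerSeries.constantCoeff (PowerSeries.coeff n (f * v)) = 0 := by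
    intro n hn
    rw [← MvPowerSeries.coeff_zero_eq_constantCoeff_apply, hS, hS0, PowerSeries.coeff_X_pow,
      if_neg (by omega)]
  set a : Fin d → MvPowerSeries σ R :=
    fun i => PowerSeries.coeff (d - 1 - (i : ℕ)) (f * v) with ha
  have ha0 : ∀ i, MvPowerSeries.constantCoeff (a i) = 0 := fun i => hp_low _ (by omega)
  have hterm : ∀ (b : MvPowerSeries σ R) (j N : ℕ),
      PowerSeries.coeff N
          (PowerSeries.C b * PowerSeries.X ^ j) =
        if N = j then b else 0 := by
    intro b j N
    rw [PowerSeries.coeff_mul_X_pow']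
    by_cases h : N = j
    · subst h
      rw [if_pos le_rfl, Nat.sub_self, PowerSeries.coeff_C, if_pos rfl, if_pos rfl]
    · by_cases h2 : j ≤ N
      · rw [if_pos h2, PowerSeries.coeff_C, if_neg (by omega), if_neg h]
      · rw [if_neg h2, if_neg h]
  have hrep : f * v = PowerSeries.X ^ d +
      ∑ i : Fin d, PowerSeries.C (a i) *
        PowerSeries.X ^ (d - 1 - (i : ℕ)) := by
    apply PowerSeries.ext
    intro N
    rw [map_add, map_sum]
    simp only [hterm, PowerSeries.coeff_X_pow]
    rcases lt_trichotomy N d with h | h | h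
    · have hmemu := Finset.mem_univ (⟨d - 1 - N, by omega⟩ : Fin d)
      rw [if_neg (by omega), zero_add,
        Finset.sum_eq_single_of_mem _ hmemu
          (fun i _ hne => if_neg fun hEq => hne (Fin.ext (show (i : ℕ) = d - 1 - N by
            have hi := i.isLt
            omega)))]
      have e1 : ((⟨d - 1 - N, by omega⟩ : Fin d) : ℕ) = d - 1 - N := rfl
      rw [e1, if_pos (by omega : N = d - 1 - (d - 1 - N)), ha]
      have e2 : d - 1 - (d - 1 - N) = N := by omega
      beta_reduce
      rw [e1, e2]
    · subst h
      rw [if_pos rfl, Finset.sum_eq_zero (fun i _ => if_neg (by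
          have hi := i.isLt
          omega)), add_zero, hp_d]
    · rw [if_neg (by omega), Finset.sum_eq_zero (fun i _ => if_neg (by
          have hi := i.isLt
          omega)), add_zero, hp_high N h]
  -- `v` is a unit
  have hcv : MvPowerSeries.constantCoeff
      (PowerSeries.constantCoeff v) = 1 := by
    rw [← MvPowerSeries.coeff_zero_eq_constantCoeff_apply,
      ← PowerSeries.coeff_zero_eq_constantCoeff_apply, hveq, hV0, hgidef,
      PowerSeries.coeff_zero_eq_constantCoeff_apply, PowerSeries.constantCoeff_invOfUnit,
      inv_one, Units.val_one]
  have hu1 : IsUnit (PowerSeries.constantCoeff v) :=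
    IsUnit.of_mul_eq_one _ (MvPowerSeries.mul_invOfUnit _ 1 (by rw [hcv, Units.val_one]))
  have hv : IsUnit v :=
    IsUnit.of_mul_eq_one _ (PowerSeries.mul_invOfUnit v hu1.unit hu1.unit_spec.symm)
  obtain ⟨vu, hvu⟩ := hv
  refine ⟨vu⁻¹, a, ha0, ?_⟩
  rw [← hrep]
  calc f = ((vu⁻¹ * vu : (PowerSeries (MvPowerSeries σ R))ˣ) :
        PowerSeries (MvPowerSeries σ R)) * f := by
        rw [inv_mul_cancel, Units.val_one, one_mul]
    _ = ↑vu⁻¹ * (f * v) := by rw [Units.val_mul, mul_assoc, hvu, mul_comm v f]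

end WPaux

end

/-- Weierstrass preparation in `k[τ][[y,z]]` (coefficients polynomial in the
parameters τ are preserved).  We model `k[τ][[y,z]]` as
`PowerSeries (MvPowerSeries (Fin r) (MvPolynomial (Fin s) k))`, with `z` the outer
(power series) variable and `y₁,…,y_r` the inner variables. -/
theorem weierstrass_preparation_polynomial_coefficients
    {k : Type*} [Field k] [CharZero k] (r s d : ℕ) (hd : 1 ≤ d)
    (f : PowerSeries (MvPowerSeries (Fin r) (MvPolynomial (Fin s) k)))
    (hlow : ∀ i < d, MvPowerSeries.constantCoeff (σ := Fin r) (R := MvPolynomial (Fin s) k)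
      (PowerSeries.coeff i f) = 0)
    (hd1 : MvPowerSeries.constantCoeff (σ := Fin r) (R := MvPolynomial (Fin s) k)
      (PowerSeries.coeff d f) = 1) :
    ∃ (u : (PowerSeries (MvPowerSeries (Fin r) (MvPolynomial (Fin s) k)))ˣ)
      (a : Fin d → MvPowerSeries (Fin r) (MvPolynomial (Fin s) k)),
      (∀ i, MvPowerSeries.constantCoeff (σ := Fin r) (R := MvPolynomial (Fin s) k) (a i) = 0) ∧
      f = (u : PowerSeries (MvPowerSeries (Fin r) (MvPolynomial (Fin s) k))) *
        (PowerSeries.X ^ d +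
          ∑ i : Fin d, PowerSeries.C (a i) * PowerSeries.X ^ (d - 1 - (i : ℕ))) := by
  exact WPaux.main d hd f hlow hd1
end

section
/- Let k be an algebraically closed field of characteristic zero and let c ∈ k[τ] be a nonzero polynomial in indeterminates τ = (τ₁,…,τ_s). If f ∈ k(τ)[[x₁,…,x_{r+1}]] is uniformly rational in τ, i.e. f = Σ_α a_α(τ) x^α with a_α = b_α / c^{|α|} for polynomials b_α ∈ k[τ], and f is regular in x_{r+1} (f(0,…,0,x_{r+1}) ≢ 0), then in the Weierstrass factorization f = (x_{r+1}^d + Σ_{i=1}^d a_i(x', τ) x_{r+1}^{d-i}) · unit over k(τ), each coefficient a_i ∈ k(τ)[[x']] is again uniformly rational in τ (possibly with a different denominator c'). -/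
/-- A power series over `k(τ) := Frac(k[τ₁,…,τ_s])` is *uniformly rational in τ* if there is a
nonzero polynomial `c ∈ k[τ]` such that every coefficient `a_α` satisfies
`a_α · c^{|α|} ∈ k[τ]`, i.e. `a_α = b_α / c^{|α|}`. -/
def UniformlyRational {k : Type*} [Field k] (s : ℕ) {n : ℕ}
    (f : MvPowerSeries (Fin n) (FractionRing (MvPolynomial (Fin s) k))) : Prop :=
  ∃ c : MvPolynomial (Fin s) k, c ≠ 0 ∧ ∀ α : Fin n →₀ ℕ, ∃ b : MvPolynomial (Fin s) k,
    MvPowerSeries.coeff α f *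
      (algebraMap (MvPolynomial (Fin s) k) (FractionRing (MvPolynomial (Fin s) k)) c) ^
        (α.sum fun _ e => e) =
      algebraMap (MvPolynomial (Fin s) k) (FractionRing (MvPolynomial (Fin s) k)) b

/-- The natural inclusion `K[[x₁,…,x_r]] → K[[x₁,…,x_{r+1}]]`
(series not involving the last variable). -/
noncomputable def embFirst {K : Type*} [CommRing K] {r : ℕ} (a : MvPowerSeries (Fin r) K) :
    MvPowerSeries (Fin (r + 1)) K :=
  fun m => if m (Fin.last r) = 0
    then MvPowerSeries.coeff (Finsupp.equivFunOnFinite.symm fun i : Fin r => m i.castSucc) a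
    else 0

namespace WPrep

variable {K : Type*} [Field K] {r : ℕ}

/-- append a last exponent -/
noncomputable def merge (α : Fin r →₀ ℕ) (j : ℕ) : Fin (r+1) →₀ ℕ :=
  Finsupp.equivFunOnFinite.symm (Fin.snoc α j)

noncomputable def projF (m : Fin (r+1) →₀ ℕ) : Fin r →₀ ℕ :=
  Finsupp.equivFunOnFinite.symm (fun i => m i.castSucc)

@[simp] lemma merge_castSucc (α : Fin r →₀ ℕ) (j : ℕ) (i : Fin r) :
    merge α j i.castSucc = α i := by
  simp [merge, Fin.snoc_castSucc]

@[simp] lemma merge_last (α : Fin r →₀ ℕ) (j : ℕ) :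
    merge α j (Fin.last r) = j := by
  simp [merge, Fin.snoc_last]

@[simp] lemma projF_apply (m : Fin (r+1) →₀ ℕ) (i : Fin r) :
    projF m i = m i.castSucc := by
  simp [projF]

@[simp] lemma projF_merge (α : Fin r →₀ ℕ) (j : ℕ) : projF (merge α j) = α := by
  ext i; simp

lemma merge_projF (m : Fin (r+1) →₀ ℕ) : merge (projF m) (m (Fin.last r)) = m := by
  ext i
  induction i using Fin.lastCases with
  | last => simp
  | cast i => simp

lemma merge_add (α β : Fin r →₀ ℕ) (i j : ℕ) :
    merge (α + β) (i + j) = merge α i + merge β j := by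
  ext t
  induction t using Fin.lastCases with
  | last => simp
  | cast t => simp

@[simp] lemma projF_zero : projF (0 : Fin (r+1) →₀ ℕ) = 0 := by ext i; simp

@[simp] lemma projF_add (m n : Fin (r+1) →₀ ℕ) : projF (m + n) = projF m + projF n := by
  ext i; simp

lemma single_last_eq_merge (j : ℕ) :
    Finsupp.single (Fin.last r) j = merge (0 : Fin r →₀ ℕ) j := by
  ext i
  induction i using Fin.lastCases with
  | last => simp
  | cast i => simp [Finsupp.single_apply, ((Fin.castSucc_lt_last i).ne').symm, (Fin.castSucc_lt_last i).ne']

/-- total degree -/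
def degF (α : Fin r →₀ ℕ) : ℕ := α.sum fun _ e => e

lemma degF_add (α β : Fin r →₀ ℕ) : degF (α + β) = degF α + degF β := by
  simp [degF, Finsupp.sum_add_index]

lemma degF_pos {α : Fin r →₀ ℕ} (h : α ≠ 0) : 0 < degF α := by
  rcases Finsupp.ne_iff.mp h with ⟨i, hi⟩
  simp only [Finsupp.coe_zero, Pi.zero_apply] at hi
  have : α i ≤ degF α := by
    rw [degF, Finsupp.sum_fintype _ _ (fun _ => rfl)]
    exact Finset.single_le_sum (fun _ _ => Nat.zero_le _) (Finset.mem_univ i)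
  omega

lemma sum_merge (α : Fin r →₀ ℕ) (j : ℕ) :
    ((merge α j).sum fun _ e => e) = degF α + j := by
  rw [Finsupp.sum_fintype _ _ (fun _ => rfl), Fin.sum_univ_castSucc]
  rw [degF, Finsupp.sum_fintype _ _ (fun _ => rfl)]
  simp


variable (f : MvPowerSeries (Fin (r+1)) K) (d : ℕ)

/-- coefficients of `f`, double indexed -/
noncomputable def Fc (α : Fin r →₀ ℕ) (j : ℕ) : K :=
  MvPowerSeries.coeff (merge α j) f

/-- coefficients of the inverse of `∑ F 0 (d+i) t^i` -/
noncomputable def Ecoef : ℕ → K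
  | 0 => (Fc f 0 d)⁻¹
  | (l+1) => -(Fc f 0 d)⁻¹ *
      ∑ i ∈ Finset.range (l+1), Fc f 0 (d+1+i) * Ecoef (l - i)
  decreasing_by exact Nat.lt_succ_of_le (Nat.sub_le _ _)

noncomputable def Vcoef : (Fin r →₀ ℕ) → ℕ → K := fun α j =>
  if hα : α = 0 then Ecoef f d j
  else - ∑ q ∈ (Finset.HasAntidiagonal.antidiagonal α).attach,
    if q.1.1 = 0 then 0 else
      ∑ p ∈ Finset.HasAntidiagonal.antidiagonal j, Ecoef f d p.1 *
        ∑ w ∈ Finset.HasAntidiagonal.antidiagonal (d + p.2), Fc f q.1.1 w.1 * Vcoef q.1.2 w.2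
  termination_by α _ => degF α
  decreasing_by
    rename_i hq
    have hmem := Finset.HasAntidiagonal.mem_antidiagonal.mp q.2
    have h2 := degF_pos (α := q.1.1) (by exact hq)
    have h1 : degF q.1.1 + degF q.1.2 = degF (q.1.1 + q.1.2) := (degF_add _ _).symm
    rw [hmem] at h1
    omega

lemma Vcoef_zero (j : ℕ) : Vcoef f d 0 j = Ecoef f d j := by
  rw [Vcoef]; simp

/-- the β ≠ 0 part of the convolution -/
noncomputable def Rc (α : Fin r →₀ ℕ) (j : ℕ) : K :=
  ∑ q ∈ Finset.HasAntidiagonal.antidiagonal α, if q.1 = 0 then 0 else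
    ∑ w ∈ Finset.HasAntidiagonal.antidiagonal j, Fc f q.1 w.1 * Vcoef f d q.2 w.2

lemma Vcoef_spec {α : Fin r →₀ ℕ} (hα : α ≠ 0) (j : ℕ) :
    Vcoef f d α j = - ∑ p ∈ Finset.HasAntidiagonal.antidiagonal j, Ecoef f d p.1 * Rc f d α (d + p.2) := by
  rw [Vcoef, dif_neg hα]
  congr 1
  rw [Finset.sum_attach (Finset.HasAntidiagonal.antidiagonal α)
    (fun q => if q.1 = 0 then 0 else
      ∑ p ∈ Finset.HasAntidiagonal.antidiagonal j, Ecoef f d p.1 *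
        ∑ w ∈ Finset.HasAntidiagonal.antidiagonal (d + p.2), Fc f q.1 w.1 * Vcoef f d q.2 w.2)]
  have step : ∀ x ∈ Finset.HasAntidiagonal.antidiagonal α,
      (if x.1 = 0 then (0:K) else
        ∑ p ∈ Finset.HasAntidiagonal.antidiagonal j, Ecoef f d p.1 *
          ∑ w ∈ Finset.HasAntidiagonal.antidiagonal (d + p.2), Fc f x.1 w.1 * Vcoef f d x.2 w.2) =
      ∑ p ∈ Finset.HasAntidiagonal.antidiagonal j, (if x.1 = 0 then 0 else Ecoef f d p.1 *
          ∑ w ∈ Finset.HasAntidiagonal.antidiagonal (d + p.2), Fc f x.1 w.1 * Vcoef f d x.2 w.2) := by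
    intro x _
    split_ifs
    · simp
    · rfl
  rw [Finset.sum_congr rfl step, Finset.sum_comm]
  refine Finset.sum_congr rfl fun p _ => ?_
  rw [Rc, Finset.mul_sum]
  refine Finset.sum_congr rfl fun x _ => ?_
  split_ifs <;> simp

noncomputable def Aps : PowerSeries K := PowerSeries.mk fun i => Fc f 0 (d+i)
noncomputable def Bps : PowerSeries K := PowerSeries.mk (Ecoef f d)

lemma keyAB (hd : Fc f 0 d ≠ 0) : Aps f d * Bps f d = 1 := by
  ext j
  rw [PowerSeries.coeff_mul, PowerSeries.coeff_one]
  cases j with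
  | zero =>
    simp only [Finset.Nat.antidiagonal_zero, Finset.sum_singleton, Aps, Bps,
      PowerSeries.coeff_mk, Ecoef, if_pos rfl]
    rw [add_zero, mul_inv_cancel₀ hd, if_pos trivial]
  | succ l =>
    rw [Finset.Nat.antidiagonal_succ, Finset.sum_cons, Finset.sum_map, if_neg (Nat.succ_ne_zero l)]
    simp only [Aps, Bps, PowerSeries.coeff_mk, Function.Embedding.prodMap,
      Function.Embedding.coeFn_mk, Function.Embedding.refl_apply, Prod.map]
    have h1 : ∑ p ∈ Finset.HasAntidiagonal.antidiagonal l, Fc f 0 (d + Nat.succ p.1) * Ecoef f d p.2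
        = ∑ i ∈ Finset.range (l+1), Fc f 0 (d+1+i) * Ecoef f d (l - i) := by
      rw [Finset.Nat.sum_antidiagonal_eq_sum_range_succ_mk]
      refine Finset.sum_congr rfl fun i _ => ?_
      congr 2
      omega
    rw [h1]
    have h2 : Ecoef f d (l+1) = -(Fc f 0 d)⁻¹ *
        ∑ i ∈ Finset.range (l+1), Fc f 0 (d+1+i) * Ecoef f d (l - i) := by
      rw [Ecoef]
    rw [add_zero, h2]
    field_simp
    ring

lemma mkF0_eq (hlow : ∀ j < d, Fc f 0 j = 0) :
    PowerSeries.mk (Fc f 0) = Aps f d * PowerSeries.X ^ d := by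
  ext n
  rw [PowerSeries.coeff_mk, PowerSeries.coeff_mul_X_pow']
  split_ifs with h
  · rw [Aps, PowerSeries.coeff_mk]
    congr 1
    omega
  · exact hlow n (by omega)

noncomputable def Pc (α : Fin r →₀ ℕ) (j : ℕ) : K :=
  if α = 0 then (if j = d then 1 else 0) else (if j < d then Rc f d α j else 0)

lemma main_identity (hlow : ∀ j < d, Fc f 0 j = 0) (hd : Fc f 0 d ≠ 0)
    (α : Fin r →₀ ℕ) (j : ℕ) :
    ∑ q ∈ Finset.HasAntidiagonal.antidiagonal α, ∑ p ∈ Finset.HasAntidiagonal.antidiagonal j,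
      Fc f q.1 p.1 * Vcoef f d q.2 p.2 = Pc f d α j := by
  by_cases hα : α = 0
  · subst hα
    rw [Finsupp.antidiagonal_zero, Finset.sum_singleton]
    have h1 : ∑ p ∈ Finset.HasAntidiagonal.antidiagonal j, Fc f 0 p.1 * Vcoef f d 0 p.2
        = PowerSeries.coeff j (PowerSeries.mk (Fc f 0) * Bps f d) := by
      rw [PowerSeries.coeff_mul]
      exact Finset.sum_congr rfl fun p _ => by
        rw [PowerSeries.coeff_mk, Bps, PowerSeries.coeff_mk, Vcoef_zero]
    rw [h1, mkF0_eq f d hlow]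
    have h2 : Aps f d * PowerSeries.X ^ d * Bps f d
        = PowerSeries.X ^ d * (Aps f d * Bps f d) := by ring
    rw [h2, keyAB f d hd, mul_one, PowerSeries.coeff_X_pow, Pc, if_pos rfl]
  · have hsplit : ∀ q ∈ Finset.HasAntidiagonal.antidiagonal α,
        (∑ p ∈ Finset.HasAntidiagonal.antidiagonal j, Fc f q.1 p.1 * Vcoef f d q.2 p.2) =
        (if q.1 = 0 then ∑ p ∈ Finset.HasAntidiagonal.antidiagonal j, Fc f q.1 p.1 * Vcoef f d q.2 p.2 else 0)
        + (if q.1 = 0 then 0 else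
            ∑ p ∈ Finset.HasAntidiagonal.antidiagonal j, Fc f q.1 p.1 * Vcoef f d q.2 p.2) := by
      intro q _
      split_ifs <;> simp
    rw [Finset.sum_congr rfl hsplit, Finset.sum_add_distrib]
    have hone : (∑ q ∈ Finset.HasAntidiagonal.antidiagonal α, if q.1 = 0 then
          ∑ p ∈ Finset.HasAntidiagonal.antidiagonal j, Fc f q.1 p.1 * Vcoef f d q.2 p.2 else 0)
        = ∑ p ∈ Finset.HasAntidiagonal.antidiagonal j, Fc f 0 p.1 * Vcoef f d α p.2 := by
      rw [Finset.sum_eq_single_of_mem ((0 : Fin r →₀ ℕ), α)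
        (Finset.HasAntidiagonal.mem_antidiagonal.mpr (zero_add α))]
      · rw [if_pos rfl]
      · rintro ⟨β, γ⟩ hmem hne
        rw [Finset.HasAntidiagonal.mem_antidiagonal] at hmem
        by_cases hβ : β = 0
        · exfalso
          apply hne
          subst hβ
          rw [zero_add] at hmem
          simp only at hmem
          rw [hmem]
        · rw [if_neg hβ]
    have htwo : (∑ q ∈ Finset.HasAntidiagonal.antidiagonal α, if q.1 = 0 then 0 else
          ∑ p ∈ Finset.HasAntidiagonal.antidiagonal j, Fc f q.1 p.1 * Vcoef f d q.2 p.2)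
        = Rc f d α j := rfl
    rw [hone, htwo]
    have hmkV : PowerSeries.mk (Vcoef f d α)
        = -(Bps f d * PowerSeries.mk (fun m => Rc f d α (d + m))) := by
      ext n
      rw [PowerSeries.coeff_mk, Vcoef_spec f d hα, map_neg, PowerSeries.coeff_mul]
      congr 1
      exact Finset.sum_congr rfl fun p _ => by rw [Bps, PowerSeries.coeff_mk, PowerSeries.coeff_mk]
    have hfirst : ∑ p ∈ Finset.HasAntidiagonal.antidiagonal j, Fc f 0 p.1 * Vcoef f d α p.2
        = PowerSeries.coeff j (PowerSeries.mk (Fc f 0) * PowerSeries.mk (Vcoef f d α)) := by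
      rw [PowerSeries.coeff_mul]
      exact Finset.sum_congr rfl fun p _ => by rw [PowerSeries.coeff_mk, PowerSeries.coeff_mk]
    rw [hfirst, hmkV, mkF0_eq f d hlow]
    have h3 : Aps f d * PowerSeries.X ^ d * -(Bps f d * PowerSeries.mk (fun m => Rc f d α (d + m)))
        = -(PowerSeries.X ^ d * ((Aps f d * Bps f d) * PowerSeries.mk (fun m => Rc f d α (d + m)))) := by
      ring
    rw [h3, keyAB f d hd, one_mul, map_neg, PowerSeries.coeff_X_pow_mul',
      PowerSeries.coeff_mk, Pc, if_neg hα]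
    by_cases hj : j < d
    · rw [if_neg (by omega), if_pos hj]
      simp
    · rw [if_pos (by omega), if_neg hj]
      have : d + (j - d) = j := by omega
      rw [this]
      ring

section Weights

variable {A : Type*} [CommRing A] (φ : A →+* K) (e : A)

/-- `z` has denominator at most `e^N` -/
def Wt (N : ℕ) (z : K) : Prop := ∃ p : A, z * φ e ^ N = φ p

variable {φ : A →+* K} {e : A}

lemma Wt.mono {N M : ℕ} {z : K} (h : Wt φ e N z) (hNM : N ≤ M) : Wt φ e M z := by
  obtain ⟨p, hp⟩ := h
  refine ⟨p * e ^ (M - N), ?_⟩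
  rw [map_mul, map_pow, ← hp]
  rw [mul_assoc, ← pow_add]
  congr 2
  omega

lemma Wt.zero (N : ℕ) : Wt φ e N 0 := ⟨0, by simp⟩

lemma Wt.neg {N : ℕ} {z : K} (h : Wt φ e N z) : Wt φ e N (-z) := by
  obtain ⟨p, hp⟩ := h
  exact ⟨-p, by rw [neg_mul, hp, map_neg]⟩

lemma Wt.mul {N M : ℕ} {z w : K} (hz : Wt φ e N z) (hw : Wt φ e M w) :
    Wt φ e (N + M) (z * w) := by
  obtain ⟨p, hp⟩ := hz
  obtain ⟨q, hq⟩ := hw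
  refine ⟨p * q, ?_⟩
  rw [pow_add, map_mul, ← hp, ← hq]
  ring

lemma Wt.sum {ι : Type*} {s : Finset ι} {g : ι → K} {N : ℕ}
    (h : ∀ i ∈ s, Wt φ e N (g i)) : Wt φ e N (∑ i ∈ s, g i) := by
  classical
  induction s using Finset.induction_on with
  | empty => simpa using Wt.zero N
  | insert a t hx ih =>
    rw [Finset.sum_insert hx]
    obtain ⟨p, hp⟩ := h a (Finset.mem_insert_self a t)
    obtain ⟨q, hq⟩ := ih fun i hi => h i (Finset.mem_insert_of_mem hi)
    exact ⟨p + q, by rw [add_mul, hp, hq, map_add]⟩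

end Weights

lemma wt_ineq1 (d l i : ℕ) (hi : i ≤ l) :
    1 + (d+1+i) + (d+2)*(l-i+1) ≤ (d+2)*(l+1+1) := by
  have h : (d+2)*(l+1+1) = (d+2)*(l-i+1) + (d+2)*(i+1) := by
    rw [← Nat.mul_add]
    congr 1
    omega
  have h2 : i ≤ (d+2)*i := Nat.le_mul_of_pos_left i (by omega)
  have h3 : (d+2)*(i+1) = (d+2)*i + (d+2) := by ring
  linarith

lemma wt_ineq2 (d j l j'' i l' dbeta dgamma : ℕ) (h1 : l + j'' = j) (h2 : i + l' = d + j'')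
    (h3 : 1 ≤ dbeta) :
    (d+2)*(l+1) + ((dbeta + i) + (((d+2)*(d+1)+1)*dgamma + (d+2)*l' + (d+2)))
      ≤ ((d+2)*(d+1)+1)*(dbeta+dgamma) + (d+2)*j + (d+2) := by
  have e1 : ((d+2)*(d+1)+1)*(dbeta+dgamma)
      = ((d+2)*(d+1)+1)*dbeta + ((d+2)*(d+1)+1)*dgamma := by ring
  have e2 : (d+2)*(l+1) = (d+2)*l + (d+2) := by ring
  have e3 : (d+2)*i + (d+2)*l' = (d+2)*d + (d+2)*j'' := by
    rw [← Nat.mul_add, ← Nat.mul_add, h2]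
  have e4 : (d+2)*j = (d+2)*l + (d+2)*j'' := by rw [← Nat.mul_add, h1]
  have e5 : (d+2)*(d+1)+1 ≤ (((d+2)*(d+1))+1)*dbeta := Nat.le_mul_of_pos_right _ (by omega)
  have e6 : i ≤ (d+2)*i := Nat.le_mul_of_pos_left i (by omega)
  have e7 : ((d+2)*(d+1))+1 = (d+2)*d + (d+2) + 1 := by ring
  have e8 : ((d+2)*(d+1)+1)*dbeta = dbeta + ((d+2)*(d+1))*dbeta := by ring
  have e9 : (d+2)*(d+1) ≤ ((d+2)*(d+1))*dbeta := Nat.le_mul_of_pos_right _ (by omega)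
  have e10 : (d+2)*(d+1) = (d+2)*d + (d+2) := by ring
  nlinarith [e1, e2, e3, e4, e5, e6, e7, e8, e9, e10]

lemma wt_ineq3 (d j i l' dbeta dgamma : ℕ) (h2 : i + l' = j) (hj : j ≤ d) (h3 : 1 ≤ dbeta) :
    (dbeta + i) + (((d+2)*(d+1)+1)*dgamma + (d+2)*l' + (d+2))
      ≤ (((d+2)*(d+1)+1) + (d+2)*d + (d+2))*(dbeta+dgamma) := by
  have e1 : (((d+2)*(d+1)+1) + (d+2)*d + (d+2))*(dbeta+dgamma)
      = ((d+2)*(d+1)+1)*dbeta + ((d+2)*(d+1)+1)*dgamma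
        + ((d+2)*d + (d+2))*dbeta + ((d+2)*d + (d+2))*dgamma := by ring
  have e2 : ((d+2)*(d+1)+1)*dbeta = dbeta + ((d+2)*(d+1))*dbeta := by ring
  have e3 : (d+2)*(d+1) ≤ ((d+2)*(d+1))*dbeta := Nat.le_mul_of_pos_right _ (by omega)
  have e4 : (d+2)*d + (d+2) ≤ ((d+2)*d + (d+2))*dbeta := Nat.le_mul_of_pos_right _ (by omega)
  have e5 : i ≤ d := by omega
  have e6 : l' ≤ j := by omega
  have e7 : (d+2)*l' ≤ (d+2)*d := Nat.mul_le_mul_left _ (by omega)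
  have e8 : (d+2)*(d+1) = (d+2)*d + (d+2) := by ring
  nlinarith [e1, e2, e3, e4, e5, e6, e7, e8, Nat.zero_le (((d+2)*d + (d+2))*dgamma)]

section WeightBounds

variable {A : Type*} [CommRing A] {φ : A →+* K} {e : A}

lemma wtE (hE0 : Wt φ e 1 (Fc f 0 d)⁻¹) (hF0 : ∀ j, Wt φ e j (Fc f 0 j)) (l : ℕ) :
    Wt φ e ((d+2)*(l+1)) (Ecoef f d l) := by
  induction l using Nat.strong_induction_on with
  | _ l ih =>
    match l with
    | 0 =>
      rw [Ecoef]
      exact hE0.mono (by omega)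
    | (l+1) =>
      rw [Ecoef, neg_mul, Finset.mul_sum]
      apply Wt.neg
      apply Wt.sum
      intro i hi
      rw [Finset.mem_range] at hi
      have h1 : Wt φ e (1 + ((d+1+i) + (d+2)*(l-i+1)))
          ((Fc f 0 d)⁻¹ * (Fc f 0 (d+1+i) * Ecoef f d (l-i))) :=
        hE0.mul ((hF0 (d+1+i)).mul (ih (l-i) (by omega)))
      exact h1.mono (by have := wt_ineq1 d l i (by omega); omega)

lemma wtV (hE0 : Wt φ e 1 (Fc f 0 d)⁻¹) (hF : ∀ α j, Wt φ e (degF α + j) (Fc f α j)) :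
    ∀ n (α : Fin r →₀ ℕ), degF α = n → ∀ j,
      Wt φ e (((d+2)*(d+1)+1)*(degF α) + (d+2)*j + (d+2)) (Vcoef f d α j) := by
  have hF0 : ∀ j, Wt φ e j (Fc f 0 j) := by
    intro j
    simpa [degF] using hF 0 j
  intro n
  induction n using Nat.strong_induction_on with
  | _ n ih =>
    intro α hdeg j
    by_cases hα : α = 0
    · subst hα
      rw [Vcoef_zero]
      exact (wtE f d hE0 hF0 j).mono (by nlinarith [Nat.zero_le (((d+2)*(d+1)+1)*(degF (0 : Fin r →₀ ℕ)))])
    · rw [Vcoef_spec f d hα]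
      apply Wt.neg
      apply Wt.sum
      intro p hp
      rw [Finset.HasAntidiagonal.mem_antidiagonal] at hp
      rw [Rc, Finset.mul_sum]
      apply Wt.sum
      intro q hq
      rw [Finset.HasAntidiagonal.mem_antidiagonal] at hq
      by_cases hq1 : q.1 = 0
      · rw [if_pos hq1, mul_zero]
        exact Wt.zero _
      · rw [if_neg hq1, Finset.mul_sum]
        apply Wt.sum
        intro w hw
        rw [Finset.HasAntidiagonal.mem_antidiagonal] at hw
        have hdg : degF q.1 + degF q.2 = degF α := by rw [← degF_add, hq]
        have hd1 : 1 ≤ degF q.1 := degF_pos hq1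
        have hIH : Wt φ e (((d+2)*(d+1)+1)*(degF q.2) + (d+2)*w.2 + (d+2))
            (Vcoef f d q.2 w.2) := by
          apply ih (degF q.2) (by omega) q.2 rfl
        have h1 : Wt φ e ((d+2)*(p.1+1) + ((degF q.1 + w.1) +
            (((d+2)*(d+1)+1)*(degF q.2) + (d+2)*w.2 + (d+2))))
            (Ecoef f d p.1 * (Fc f q.1 w.1 * Vcoef f d q.2 w.2)) :=
          (wtE f d hE0 hF0 p.1).mul ((hF q.1 w.1).mul hIH)
        refine h1.mono ?_
        rw [← hdg]
        have := wt_ineq2 d j p.1 p.2 w.1 w.2 (degF q.1) (degF q.2) hp hw hd1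
        omega

lemma wtPc (hE0 : Wt φ e 1 (Fc f 0 d)⁻¹) (hF : ∀ α j, Wt φ e (degF α + j) (Fc f α j))
    {α : Fin r →₀ ℕ} (hα : α ≠ 0) {j : ℕ} (hj : j ≤ d) :
    Wt φ e ((((d+2)*(d+1)+1) + (d+2)*d + (d+2))*(degF α)) (Pc f d α j) := by
  rw [Pc, if_neg hα]
  split_ifs with hjd
  · rw [Rc]
    apply Wt.sum
    intro q hq
    rw [Finset.HasAntidiagonal.mem_antidiagonal] at hq
    by_cases hq1 : q.1 = 0
    · rw [if_pos hq1]
      exact Wt.zero _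
    · rw [if_neg hq1]
      apply Wt.sum
      intro w hw
      rw [Finset.HasAntidiagonal.mem_antidiagonal] at hw
      have hdg : degF q.1 + degF q.2 = degF α := by rw [← degF_add, hq]
      have hd1 : 1 ≤ degF q.1 := degF_pos hq1
      have h1 : Wt φ e ((degF q.1 + w.1) +
          (((d+2)*(d+1)+1)*(degF q.2) + (d+2)*w.2 + (d+2)))
          (Fc f q.1 w.1 * Vcoef f d q.2 w.2) :=
        (hF q.1 w.1).mul (wtV f d hE0 hF (degF q.2) q.2 rfl w.2)
      refine h1.mono ?_
      rw [← hdg]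
      have := wt_ineq3 d j w.1 w.2 (degF q.1) (degF q.2) hw hj hd1
      omega
  · exact Wt.zero _

end WeightBounds


section Assembly

lemma coeff_mul_X_pow_last (g : MvPowerSeries (Fin (r+1)) K) (t : Fin (r+1)) (n : ℕ)
    (m : Fin (r+1) →₀ ℕ) :
    MvPowerSeries.coeff m (g * MvPowerSeries.X t ^ n) =
      if Finsupp.single t n ≤ m then
        MvPowerSeries.coeff (m - Finsupp.single t n) g else 0 := by
  rw [MvPowerSeries.X_pow_eq, MvPowerSeries.coeff_mul_monomial]
  split_ifs <;> simp

lemma coeff_embFirst (a : MvPowerSeries (Fin r) K) (m : Fin (r+1) →₀ ℕ) :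
    MvPowerSeries.coeff m (embFirst a) =
      if m (Fin.last r) = 0 then MvPowerSeries.coeff (projF m) a else 0 := rfl

lemma projF_sub_single (m : Fin (r+1) →₀ ℕ) (n : ℕ) :
    projF (m - Finsupp.single (Fin.last r) n) = projF m := by
  ext i
  rw [projF_apply, projF_apply, Finsupp.tsub_apply,
    Finsupp.single_apply, if_neg (Fin.castSucc_lt_last i).ne', Nat.sub_zero]

lemma m_eq_single_iff (m : Fin (r+1) →₀ ℕ) (n : ℕ) :
    m = Finsupp.single (Fin.last r) n ↔ projF m = 0 ∧ m (Fin.last r) = n := by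
  constructor
  · rintro rfl
    rw [single_last_eq_merge]
    simp
  · rintro ⟨h1, h2⟩
    rw [single_last_eq_merge, ← h1, ← h2, merge_projF]

lemma coeff_P (d : ℕ) (a : Fin d → MvPowerSeries (Fin r) K)
    (ha : ∀ i α, MvPowerSeries.coeff α (a i) = Pc f d α (d-1-(i:ℕ)))
    (m : Fin (r+1) →₀ ℕ) :
    MvPowerSeries.coeff m (MvPowerSeries.X (Fin.last r) ^ d +
      ∑ i : Fin d, embFirst (a i) * MvPowerSeries.X (Fin.last r) ^ (d - 1 - (i : ℕ)))
    = Pc f d (projF m) (m (Fin.last r)) := by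
  classical
  rw [map_add, map_sum, MvPowerSeries.coeff_X_pow]
  have hterm : ∀ i : Fin d,
      MvPowerSeries.coeff m (embFirst (a i) * MvPowerSeries.X (Fin.last r) ^ (d - 1 - (i:ℕ)))
      = if m (Fin.last r) = d-1-(i:ℕ) then Pc f d (projF m) (m (Fin.last r)) else 0 := by
    intro i
    rw [coeff_mul_X_pow_last]
    by_cases h1 : Finsupp.single (Fin.last r) (d-1-(i:ℕ)) ≤ m
    · rw [if_pos h1, coeff_embFirst]
      have h2 : (m - Finsupp.single (Fin.last r) (d-1-(i:ℕ))) (Fin.last r)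
          = m (Fin.last r) - (d-1-(i:ℕ)) := by
        rw [Finsupp.tsub_apply, Finsupp.single_eq_same]
      have h3 : d-1-(i:ℕ) ≤ m (Fin.last r) := Finsupp.single_le_iff.mp h1
      rw [h2, projF_sub_single]
      by_cases h4 : m (Fin.last r) = d-1-(i:ℕ)
      · rw [if_pos (by omega), if_pos h4, ha, h4]
      · rw [if_neg (by omega), if_neg h4]
    · rw [if_neg h1, if_neg (fun h => h1 (Finsupp.single_le_iff.mpr (by omega)))]
  rw [Finset.sum_congr rfl (fun i _ => hterm i)]
  have hsum : (∑ i : Fin d, if m (Fin.last r) = d-1-(i:ℕ)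
        then Pc f d (projF m) (m (Fin.last r)) else 0)
      = if m (Fin.last r) < d then Pc f d (projF m) (m (Fin.last r)) else 0 := by
    by_cases hj : m (Fin.last r) < d
    · rw [if_pos hj, Finset.sum_eq_single (⟨d-1-(m (Fin.last r)), by omega⟩ : Fin d)]
      · rw [if_pos (by simp; omega)]
      · intro i _ hne
        rw [if_neg]
        intro h
        apply hne
        apply Fin.ext
        have := i.2
        simp only at h ⊢
        omega
      · intro h
        exact absurd (Finset.mem_univ _) h
    · rw [if_neg hj]
      apply Finset.sum_eq_zero
      intro i _
      rw [if_neg]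
      have := i.2
      omega
  rw [hsum]
  by_cases h5 : projF m = 0
  · by_cases h6 : m (Fin.last r) = d
    · rw [if_pos ((m_eq_single_iff m d).mpr ⟨h5, h6⟩), if_neg (by omega), add_zero,
        Pc, if_pos h5, if_pos h6]
    · rw [if_neg (fun hh => h6 ((m_eq_single_iff m d).mp hh).2), zero_add]
      split_ifs with h7
      · rfl
      · rw [Pc, if_pos h5, if_neg h6]
  · rw [if_neg (fun hh => h5 ((m_eq_single_iff m d).mp hh).1), zero_add]
    split_ifs with h7
    · rfl
    · rw [Pc, if_neg h5, if_neg h7]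

/-- the candidate inverse-unit series -/
noncomputable def vmv : MvPowerSeries (Fin (r+1)) K :=
  fun m => Vcoef f d (projF m) (m (Fin.last r))

lemma coeff_vmv (m : Fin (r+1) →₀ ℕ) :
    MvPowerSeries.coeff m (vmv f d) = Vcoef f d (projF m) (m (Fin.last r)) := rfl

lemma coeff_f_mul_vmv (hlow : ∀ j < d, Fc f 0 j = 0) (hd : Fc f 0 d ≠ 0)
    (m : Fin (r+1) →₀ ℕ) :
    MvPowerSeries.coeff m (f * vmv f d) = Pc f d (projF m) (m (Fin.last r)) := by
  classical
  rw [MvPowerSeries.coeff_mul]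
  rw [← main_identity f d hlow hd (projF m) (m (Fin.last r))]
  rw [← Finset.sum_product']
  apply Finset.sum_nbij'
    (i := fun p => ((projF p.1, projF p.2), (p.1 (Fin.last r), p.2 (Fin.last r))))
    (j := fun z => (merge z.1.1 z.2.1, merge z.1.2 z.2.2))
  · intro p hp
    rw [Finset.HasAntidiagonal.mem_antidiagonal] at hp
    rw [Finset.mem_product, Finset.HasAntidiagonal.mem_antidiagonal, Finset.HasAntidiagonal.mem_antidiagonal]
    constructor
    · rw [← projF_add, hp]
    · rw [← Finsupp.add_apply, hp]
  · intro z hz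
    rw [Finset.mem_product, Finset.HasAntidiagonal.mem_antidiagonal, Finset.HasAntidiagonal.mem_antidiagonal] at hz
    rw [Finset.HasAntidiagonal.mem_antidiagonal, ← merge_add, hz.1, hz.2, merge_projF]
  · intro p hp
    simp only
    rw [merge_projF, merge_projF]
  · intro z hz
    simp only
    rw [projF_merge, projF_merge, merge_last, merge_last]
  · intro p hp
    simp only
    rw [coeff_vmv, Fc, merge_projF]

end Assembly

end WPrep

open WPrep in
/-- the Weierstrass preparation of a series uniformly rational in τ and regular
in `x_{r+1}` has Weierstrass coefficients `a_i ∈ k(τ)[[x']]` again uniformly rational in τ. -/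
theorem weierstrass_coefficients_uniformly_rational
    {k : Type*} [Field k] [CharZero k] [IsAlgClosed k] (r s : ℕ)
    (f : MvPowerSeries (Fin (r + 1)) (FractionRing (MvPolynomial (Fin s) k)))
    (hUR : UniformlyRational s f)
    (hreg : ∃ m : ℕ, MvPowerSeries.coeff (Finsupp.single (Fin.last r) m) f ≠ 0) :
    ∃ (d : ℕ) (a : Fin d → MvPowerSeries (Fin r) (FractionRing (MvPolynomial (Fin s) k)))
      (u : (MvPowerSeries (Fin (r + 1)) (FractionRing (MvPolynomial (Fin s) k)))ˣ),
      (∀ i, MvPowerSeries.constantCoeff (a i) = 0) ∧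
      (∀ i, UniformlyRational s (a i)) ∧
      f = (MvPowerSeries.X (Fin.last r) ^ d +
            ∑ i : Fin d, embFirst (a i) * MvPowerSeries.X (Fin.last r) ^ (d - 1 - (i : ℕ))) *
          (u : MvPowerSeries (Fin (r + 1)) (FractionRing (MvPolynomial (Fin s) k))) := by
  classical
  obtain ⟨c, hc0, hb⟩ := hUR
  have hreg' : ∃ m : ℕ, Fc f 0 m ≠ 0 := by
    obtain ⟨m, hm⟩ := hreg
    exact ⟨m, by rwa [Fc, ← single_last_eq_merge]⟩
  set d := Nat.find hreg' with hd_def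
  have hdne : Fc f 0 d ≠ 0 := Nat.find_spec hreg'
  have hlow : ∀ j < d, Fc f 0 j = 0 := by
    intro j hj
    by_contra hne
    exact Nat.find_min hreg' hj hne
  set φ := algebraMap (MvPolynomial (Fin s) k) (FractionRing (MvPolynomial (Fin s) k)) with hφ
  have hφinj : Function.Injective φ := IsFractionRing.injective _ _
  have hdeg0 : degF (0 : Fin r →₀ ℕ) = 0 := by simp [degF]
  obtain ⟨bb, hbb⟩ := hb (merge 0 d)
  rw [sum_merge 0 d, hdeg0, zero_add] at hbb
  have hbb' : Fc f 0 d * φ c ^ d = φ bb := hbb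
  have hcne : φ c ≠ 0 := fun h => hc0 (hφinj (by rw [h, map_zero]))
  have hbb0 : bb ≠ 0 := by
    rintro rfl
    rw [map_zero] at hbb'
    rcases mul_eq_zero.mp hbb' with h | h
    · exact hdne h
    · exact pow_ne_zero _ hcne h
  set e := bb * c with he_def
  have hF : ∀ (α : Fin r →₀ ℕ) (j : ℕ), Wt φ e (degF α + j) (Fc f α j) := by
    intro α j
    obtain ⟨b', hb'⟩ := hb (merge α j)
    rw [sum_merge α j] at hb'
    have hb'' : Fc f α j * φ c ^ (degF α + j) = φ b' := hb'
    refine ⟨b' * bb ^ (degF α + j), ?_⟩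
    rw [he_def, map_mul, mul_pow, map_mul, map_pow, ← hb'']
    ring
  have hE0 : Wt φ e 1 ((Fc f 0 d)⁻¹) := by
    refine ⟨c ^ (d+1), ?_⟩
    rw [pow_one, he_def, map_mul, map_pow, ← hbb']
    field_simp
    ring
  set aser : Fin d → MvPowerSeries (Fin r) (FractionRing (MvPolynomial (Fin s) k)) :=
    fun i => (fun α => Pc f d α (d-1-(i:ℕ))) with ha_def
  have ha : ∀ (i : Fin d) α, MvPowerSeries.coeff α (aser i) = Pc f d α (d-1-(i:ℕ)) :=
    fun _ _ => rfl
  have hconstv : MvPowerSeries.constantCoeff (vmv f d) = (Fc f 0 d)⁻¹ := by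
    rw [← MvPowerSeries.coeff_zero_eq_constantCoeff, coeff_vmv]
    rw [projF_zero]
    rw [show (0 : Fin (r+1) →₀ ℕ) (Fin.last r) = 0 from rfl, Vcoef_zero, Ecoef]
  have hu : IsUnit (vmv f d) := by
    rw [MvPowerSeries.isUnit_iff_constantCoeff, hconstv]
    exact isUnit_iff_ne_zero.mpr (inv_ne_zero hdne)
  refine ⟨d, aser, hu.unit⁻¹, ?_, ?_, ?_⟩
  · intro i
    rw [← MvPowerSeries.coeff_zero_eq_constantCoeff, ha]
    rw [Pc, if_pos rfl, if_neg (by have := i.2; omega)]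
  · intro i
    refine ⟨e ^ ((((d+2)*(d+1)+1) + (d+2)*d + (d+2))),
      pow_ne_zero _ (mul_ne_zero hbb0 hc0), ?_⟩
    intro α
    by_cases hα : α = 0
    · subst hα
      refine ⟨0, ?_⟩
      rw [ha, Pc, if_pos rfl, if_neg (by have := i.2; omega), map_zero, zero_mul]
    · obtain ⟨p, hp⟩ := wtPc f d hE0 hF hα (show d-1-(i:ℕ) ≤ d by omega)
      refine ⟨p, ?_⟩
      have h2 : (φ (e ^ ((((d+2)*(d+1)+1) + (d+2)*d + (d+2)))))
            ^ (α.sum fun _ x => x)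
          = φ e ^ (((((d+2)*(d+1)+1) + (d+2)*d + (d+2))) * degF α) := by
        rw [map_pow, ← pow_mul]
        rfl
      rw [ha, h2]
      exact hp
  · have hfv : f * vmv f d = MvPowerSeries.X (Fin.last r) ^ d +
        ∑ i : Fin d, embFirst (aser i) * MvPowerSeries.X (Fin.last r) ^ (d - 1 - (i : ℕ)) := by
      ext m
      rw [coeff_f_mul_vmv f d hlow hdne m, coeff_P f d aser ha m]
    have h1 : (hu.unit : MvPowerSeries (Fin (r+1)) (FractionRing (MvPolynomial (Fin s) k)))
        = vmv f d := hu.unit_spec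
    have hinv : vmv f d * ↑hu.unit⁻¹ = 1 := by
      have h2 := hu.unit.mul_inv
      rw [h1] at h2
      exact h2
    calc f = f * ((vmv f d) * ↑hu.unit⁻¹) := by rw [hinv, mul_one]
    _ = (f * vmv f d) * ↑hu.unit⁻¹ := by ring
    _ = _ * ↑hu.unit⁻¹ := by rw [hfv]
end

section
/- Let k be an algebraically closed field of characteristic zero and let y_i, z_i ∈ k[[u,b,t]] satisfy: y_i = O(uⁿ) and z_i = O(uⁿ) (every monomial of y_i and z_i has u-degree ≥ n), and there are expansions y_i(u,b,t) = y_i(u,0,t) + b²u^{m_i}φ_i(u,b,t), z_i(u,b,t) = z_i(u,0,t) + b·u^{m_i}ψ_i(u,b,t) with φ_i, ψ_i ∈ k[[u,b,t]]. If for indices i ≠ j one has y_i − y_j = u^{k_{ij}}·unit and z_i − z_j = O(u^{k_{ij}}), and m_i ≠ m_j with φ_i(0), ψ_i(0), φ_j(0), ψ_j(0) all nonzero, then k_{ij} ≤ min{m_i, m_j}. -/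
/-- Setting `b = 0` in a series of `k[[u,b,t]]` (variables `inl 0 = u`, `inl 1 = b`). -/
noncomputable def setB0 {l : ℕ} {k : Type*} [CommRing k]
    (f : MvPowerSeries (Fin 2 ⊕ Fin l) k) : MvPowerSeries (Fin 2 ⊕ Fin l) k :=
  fun m => if m (Sum.inl 1) = 0 then MvPowerSeries.coeff m f else 0

open MvPowerSeries Finsupp

lemma key_le {l : ℕ} {k : Type*} [Field k] (mi mj kij : ℕ)
    (zi zj psii psij : MvPowerSeries (Fin 2 ⊕ Fin l) k)
    (hzi : zi = setB0 zi + MvPowerSeries.X (Sum.inl 1) *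
      MvPowerSeries.X (Sum.inl 0) ^ mi * psii)
    (hzj : zj = setB0 zj + MvPowerSeries.X (Sum.inl 1) *
      MvPowerSeries.X (Sum.inl 0) ^ mj * psij)
    (hzdiv : MvPowerSeries.X (Sum.inl 0) ^ kij ∣ (zi - zj))
    (hmm : mi < mj)
    (hpsii : MvPowerSeries.constantCoeff psii ≠ 0) :
    kij ≤ mi := by
  by_contra h
  push_neg at h
  set M : (Fin 2 ⊕ Fin l) →₀ ℕ :=
    Finsupp.single (Sum.inl 1) 1 + Finsupp.single (Sum.inl 0) mi with hMdef
  have hM0 : M (Sum.inl 0) = mi := by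
    simp [hMdef, Finsupp.single_apply]
  have hM1 : M (Sum.inl 1) = 1 := by
    simp [hMdef, Finsupp.single_apply]
  -- coefficient of M in zi - zj is zero by divisibility
  have hzero : MvPowerSeries.coeff M (zi - zj) = 0 := by
    rw [MvPowerSeries.X_pow_dvd_iff] at hzdiv
    exact hzdiv M (by rw [hM0]; exact h)
  -- setB0 contributes nothing at M
  have hsetB0 : ∀ f : MvPowerSeries (Fin 2 ⊕ Fin l) k,
      MvPowerSeries.coeff M (setB0 f) = 0 := by
    intro f
    rw [MvPowerSeries.coeff_apply]
    simp [setB0, hM1]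
  -- coefficient of M in the i-th correction term
  have hXX : (MvPowerSeries.X (Sum.inl 1) : MvPowerSeries (Fin 2 ⊕ Fin l) k) *
      MvPowerSeries.X (Sum.inl 0) ^ mi = MvPowerSeries.monomial M 1 := by
    rw [MvPowerSeries.X, MvPowerSeries.X_pow_eq, MvPowerSeries.monomial_mul_monomial,
      one_mul, hMdef]
  have hcoeffi : MvPowerSeries.coeff M (MvPowerSeries.X (Sum.inl 1) *
      MvPowerSeries.X (Sum.inl 0) ^ mi * psii) =
      MvPowerSeries.constantCoeff psii := by
    rw [hXX, MvPowerSeries.coeff_monomial_mul, if_pos le_rfl, tsub_self, one_mul,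
      MvPowerSeries.coeff_zero_eq_constantCoeff]
  -- coefficient of M in the j-th correction term is zero
  have hcoeffj : MvPowerSeries.coeff M (MvPowerSeries.X (Sum.inl 1) *
      MvPowerSeries.X (Sum.inl 0) ^ mj * psij) = 0 := by
    have hdvd : (MvPowerSeries.X (Sum.inl 0) : MvPowerSeries (Fin 2 ⊕ Fin l) k) ^ mj ∣
        MvPowerSeries.X (Sum.inl 1) * MvPowerSeries.X (Sum.inl 0) ^ mj * psij :=
      ⟨MvPowerSeries.X (Sum.inl 1) * psij, by ring⟩
    rw [MvPowerSeries.X_pow_dvd_iff] at hdvd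
    exact hdvd M (by rw [hM0]; exact hmm)
  apply hpsii
  rw [← hcoeffi]
  have : MvPowerSeries.coeff M zi - MvPowerSeries.coeff M zj = 0 := by
    rw [← map_sub]; exact hzero
  calc MvPowerSeries.coeff M (MvPowerSeries.X (Sum.inl 1) *
        MvPowerSeries.X (Sum.inl 0) ^ mi * psii)
      = MvPowerSeries.coeff M zi := by rw [hzi, map_add, hsetB0, zero_add]
    _ = MvPowerSeries.coeff M zj := sub_eq_zero.mp this
    _ = 0 := by rw [hzj, map_add, hsetB0, zero_add, hcoeffj]

/-- last claim of Lemma 5.6: for two polar wedge parameterizations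
`y_m = y_m(u,0,t) + b²u^{m_m}φ_m`, `z_m = z_m(u,0,t) + b·u^{m_m}ψ_m` (`m = i,j`), all of
order `≥ n` in `u`, with contact `y_i − y_j = u^{k_{ij}}·unit`, `z_i − z_j = O(u^{k_{ij}})`,
if `m_i ≠ m_j` and `φ_i(0), ψ_i(0), φ_j(0), ψ_j(0) ≠ 0` then `k_{ij} ≤ min{m_i, m_j}`. -/
theorem contact_order_le_min {l : ℕ} {k : Type*} [Field k] [CharZero k] [IsAlgClosed k]
    (n mi mj kij : ℕ) (hn : 1 ≤ n)
    (yi yj zi zj phii psii phij psij : MvPowerSeries (Fin 2 ⊕ Fin l) k)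
    (hyin : MvPowerSeries.X (Sum.inl 0) ^ n ∣ yi)
    (hzin : MvPowerSeries.X (Sum.inl 0) ^ n ∣ zi)
    (hyjn : MvPowerSeries.X (Sum.inl 0) ^ n ∣ yj)
    (hzjn : MvPowerSeries.X (Sum.inl 0) ^ n ∣ zj)
    (hyi : yi = setB0 yi + MvPowerSeries.X (Sum.inl 1) ^ 2 *
      MvPowerSeries.X (Sum.inl 0) ^ mi * phii)
    (hzi : zi = setB0 zi + MvPowerSeries.X (Sum.inl 1) *
      MvPowerSeries.X (Sum.inl 0) ^ mi * psii)
    (hyj : yj = setB0 yj + MvPowerSeries.X (Sum.inl 1) ^ 2 *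
      MvPowerSeries.X (Sum.inl 0) ^ mj * phij)
    (hzj : zj = setB0 zj + MvPowerSeries.X (Sum.inl 1) *
      MvPowerSeries.X (Sum.inl 0) ^ mj * psij)
    (hcontact : ∃ v, MvPowerSeries.constantCoeff v ≠ 0 ∧
      yi - yj = MvPowerSeries.X (Sum.inl 0) ^ kij * v)
    (hzdiv : MvPowerSeries.X (Sum.inl 0) ^ kij ∣ (zi - zj))
    (hm : mi ≠ mj)
    (hphii : MvPowerSeries.constantCoeff phii ≠ 0)
    (hpsii : MvPowerSeries.constantCoeff psii ≠ 0)
    (hphij : MvPowerSeries.constantCoeff phij ≠ 0)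
    (hpsij : MvPowerSeries.constantCoeff psij ≠ 0) :
    kij ≤ min mi mj := by
  rcases hm.lt_or_gt with hlt | hlt
  · have := key_le mi mj kij zi zj psii psij hzi hzj hzdiv hlt hpsii
    exact le_min this (this.trans hlt.le)
  · have hdiv' : MvPowerSeries.X (Sum.inl 0) ^ kij ∣ (zj - zi) := by
      have := hzdiv.neg_right
      rwa [neg_sub] at this
    have := key_le mj mi kij zj zi psij psii hzj hzi hdiv' hlt hpsij
    exact le_min (this.trans hlt.le) this
end

section
/- Let k be an algebraically closed field of characteristic zero, F ∈ k[[X,Y,Z,b,t]], and suppose components of {F = F'_Z = 0} are parameterized as (u,b,t) ↦ (uⁿ, Y_i(u,b,t), Z_i(u,b,t), b, t) with Y_i, Z_i ∈ k[[u,b,t]]. Differentiating the identities F(uⁿ,Y_i,Z_i,b,t) = 0 and F'_Z(uⁿ,Y_i,Z_i,b,t) = 0 with respect to b and each t_j shows: at any point of the parameterized set where additionally F'_Y = 0, one has F'_b = 0 and F'_{t_j} = 0 for all j; and where also u ≠ 0 one gets F'_X = 0. Hence {F = F'_Z = F'_Y = 0, X ≠ 0} is contained in the locus where all first partial derivatives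 of F vanish. -/
/-- Formal partial derivative `∂f/∂x_i` of a multivariate power series. -/
noncomputable def pd {σ k : Type*} [CommRing k] (i : σ) (f : MvPowerSeries σ k) :
    MvPowerSeries σ k :=
  fun m => ((m i + 1 : ℕ) : k) * MvPowerSeries.coeff (m + Finsupp.single i 1) f

/-- Substitution of power series (valid when the substituted series have zero constant term). -/
noncomputable def msubst {σ τ k : Type*} [Fintype σ] [DecidableEq σ] [CommRing k]
    (s : σ → MvPowerSeries τ k) (f : MvPowerSeries σ k) : MvPowerSeries τ k :=
  fun α => ∑ m ∈ Finset.Iic (Finsupp.equivFunOnFinite.symm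
      (fun _ : σ => Finsupp.sum α fun _ e => e)),
    MvPowerSeries.coeff m f *
      MvPowerSeries.coeff α (Finsupp.prod m fun i e => s i ^ e)

section
variable {σ τ k : Type*} [CommRing k]

def degw {ι : Type*} (α : ι →₀ ℕ) : ℕ := α.sum fun _ e => e

lemma degw_add {ι : Type*} (p q : ι →₀ ℕ) : degw (p + q) = degw p + degw q :=
  Finsupp.sum_add_index' (fun _ => rfl) (fun _ _ _ => rfl)

lemma degw_single {ι : Type*} (i : ι) (n : ℕ) : degw (Finsupp.single i n) = n := by
  simp [degw]

lemma le_degw {ι : Type*} (p : ι →₀ ℕ) (i : ι) : p i ≤ degw p := by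
  by_cases hi : i ∈ p.support
  · exact Finset.single_le_sum (f := fun a => p a) (fun _ _ => Nat.zero_le _) hi
  · simp [Finsupp.notMem_support_iff.mp hi]

lemma degw_eq_zero {ι : Type*} {p : ι →₀ ℕ} (h : degw p = 0) : p = 0 := by
  ext i; have := le_degw p i; rw [h] at this; simpa using this

lemma coeff_pd (i : σ) (f : MvPowerSeries σ k) (α : σ →₀ ℕ) :
    MvPowerSeries.coeff α (pd i f) =
      ((α i + 1 : ℕ) : k) * MvPowerSeries.coeff (α + Finsupp.single i 1) f := rfl
end
section
variable {σ τ k : Type*} [CommRing k]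

lemma pd_zero (i : σ) : pd i (0 : MvPowerSeries σ k) = 0 := by
  ext α; rw [coeff_pd]; simp

lemma pd_add (i : σ) (f g : MvPowerSeries σ k) : pd i (f + g) = pd i f + pd i g := by
  ext α; rw [map_add, coeff_pd, coeff_pd, coeff_pd, map_add]; ring

lemma add_single_ne_zero (α : σ →₀ ℕ) (i : σ) : α + Finsupp.single i 1 ≠ 0 := by
  intro h
  have := DFunLike.congr_fun h i
  simp at this

lemma pd_C (i : σ) (a : k) : pd i (MvPowerSeries.C (σ := σ) (R := k) a) = 0 := by
  classical
  ext α; rw [coeff_pd]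
  rw [MvPowerSeries.coeff_C, if_neg (add_single_ne_zero α i)]
  simp

lemma pd_one (i : σ) : pd i (1 : MvPowerSeries σ k) = 0 := by
  have := pd_C (k := k) i 1; rwa [map_one] at this

lemma pd_X_self [DecidableEq σ] (i : σ) : pd i (MvPowerSeries.X i : MvPowerSeries σ k) = 1 := by
  ext α; rw [coeff_pd, MvPowerSeries.coeff_X]
  by_cases h : α = 0
  · subst h; simp
  · rw [if_neg, MvPowerSeries.coeff_one, if_neg h, mul_zero]
    intro hc
    apply h
    have : α + Finsupp.single i 1 - Finsupp.single i 1 = Finsupp.single i 1 - Finsupp.single i 1 := by rw [hc]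
    simpa using this

lemma pd_X_ne [DecidableEq σ] {i j : σ} (h : i ≠ j) : pd i (MvPowerSeries.X j : MvPowerSeries σ k) = 0 := by
  ext α; rw [coeff_pd, MvPowerSeries.coeff_X, if_neg, mul_zero, map_zero]
  intro hc
  have := DFunLike.congr_fun hc i
  simp [Finsupp.single_eq_of_ne' (Ne.symm h), Finsupp.single_eq_same] at this

lemma pd_X_pow_ne [DecidableEq σ] {i j : σ} (h : i ≠ j) (n : ℕ) :
    pd i ((MvPowerSeries.X j : MvPowerSeries σ k) ^ n) = 0 := by
  ext α; rw [coeff_pd, MvPowerSeries.X_pow_eq, MvPowerSeries.coeff_monomial, if_neg, mul_zero,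
    map_zero]
  intro hc
  have := DFunLike.congr_fun hc i
  simp [Finsupp.single_eq_of_ne' (Ne.symm h), Finsupp.single_eq_same] at this

lemma pd_X_pow_self [DecidableEq σ] (i : σ) {n : ℕ} (hn : 1 ≤ n) :
    pd i ((MvPowerSeries.X i : MvPowerSeries σ k) ^ n) =
      (n : MvPowerSeries σ k) * (MvPowerSeries.X i) ^ (n - 1) := by
  ext α
  rw [coeff_pd, MvPowerSeries.X_pow_eq, MvPowerSeries.coeff_monomial]
  have hC : (n : MvPowerSeries σ k) = MvPowerSeries.C (σ := σ) (R := k) (n : k) := by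
    rw [map_natCast]
  rw [hC, MvPowerSeries.coeff_C_mul, MvPowerSeries.X_pow_eq, MvPowerSeries.coeff_monomial]
  by_cases h : α = Finsupp.single i (n - 1)
  · subst h
    rw [if_pos, if_pos rfl]
    · have h1 : n - 1 + 1 = n := by omega
      simp [Finsupp.single_eq_same, h1]
    · rw [← Finsupp.single_add]
      congr 1
      omega
  · rw [if_neg, if_neg h, mul_zero, mul_zero]
    intro hc
    apply h
    ext j
    have := DFunLike.congr_fun hc j
    by_cases hj : j = i
    · subst hj; simp [Finsupp.single_eq_same] at this ⊢; omega
    · simp [Finsupp.single_eq_of_ne (Ne.symm hj)] at this ⊢; omega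
end

section
variable {σ k : Type*} [CommRing k] [DecidableEq σ]

lemma half (j : σ) (f g : MvPowerSeries σ k) (α : σ →₀ ℕ) :
    ∑ pq ∈ Finset.HasAntidiagonal.antidiagonal (α + Finsupp.single j 1),
        (((pq.1 : σ →₀ ℕ) j : ℕ) : k) *
          (MvPowerSeries.coeff pq.1 f * MvPowerSeries.coeff pq.2 g) =
      MvPowerSeries.coeff α (pd j f * g) := by
  classical
  rw [MvPowerSeries.coeff_mul]
  simp_rw [coeff_pd]
  rw [← Finset.sum_filter_of_ne
    (p := fun pq : (σ →₀ ℕ) × (σ →₀ ℕ) => pq.1 j ≠ 0)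
    (fun x _ hx h0 => hx (by simp [h0]))]
  refine Finset.sum_bij' (fun pq _ => (pq.1 - Finsupp.single j 1, pq.2))
      (fun pq _ => (pq.1 + Finsupp.single j 1, pq.2)) ?_ ?_ ?_ ?_ ?_
  · rintro ⟨p, q⟩ hpq
    simp only [Finset.mem_filter, Finset.HasAntidiagonal.mem_antidiagonal] at hpq ⊢
    obtain ⟨h1, h2⟩ := hpq
    have hle : Finsupp.single j 1 ≤ p := by
      rw [Finsupp.single_le_iff]; omega
    have hpe : p - Finsupp.single j 1 + Finsupp.single j 1 = p := tsub_add_cancel_of_le hle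
    have : (p - Finsupp.single j 1 + q) + Finsupp.single j 1 = α + Finsupp.single j 1 := by
      rw [add_right_comm, hpe, h1]
    exact add_right_cancel this
  · rintro ⟨p, q⟩ hpq
    simp only [Finset.HasAntidiagonal.mem_antidiagonal] at hpq
    simp only [Finset.mem_filter, Finset.HasAntidiagonal.mem_antidiagonal]
    refine ⟨?_, by simp [Finsupp.single_eq_same]⟩
    rw [add_right_comm, hpq]
  · rintro ⟨p, q⟩ hpq
    simp only [Finset.mem_filter, Finset.HasAntidiagonal.mem_antidiagonal] at hpq
    have hle : Finsupp.single j 1 ≤ p := by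
      rw [Finsupp.single_le_iff]; omega
    simp [tsub_add_cancel_of_le hle]
  · rintro ⟨p, q⟩ _
    simp
  · rintro ⟨p, q⟩ hpq
    simp only [Finset.mem_filter, Finset.HasAntidiagonal.mem_antidiagonal] at hpq
    have hle : Finsupp.single j 1 ≤ p := by
      rw [Finsupp.single_le_iff]; omega
    have h1 : ((p - Finsupp.single j 1 : σ →₀ ℕ)) j + 1 = p j := by
      rw [Finsupp.tsub_apply, Finsupp.single_eq_same]
      omega
    rw [tsub_add_cancel_of_le hle, h1]
    ring

omit [DecidableEq σ] in
lemma pd_mul (j : σ) (f g : MvPowerSeries σ k) :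
    pd j (f * g) = pd j f * g + f * pd j g := by
  classical
  ext α
  rw [map_add, coeff_pd, MvPowerSeries.coeff_mul]
  have key : ∀ pq ∈ Finset.HasAntidiagonal.antidiagonal (α + Finsupp.single j 1),
      ((α j + 1 : ℕ) : k) *
          (MvPowerSeries.coeff pq.1 f * MvPowerSeries.coeff pq.2 g) =
        (((pq.1 : σ →₀ ℕ) j : ℕ) : k) *
            (MvPowerSeries.coeff pq.1 f * MvPowerSeries.coeff pq.2 g) +
          (((pq.2 : σ →₀ ℕ) j : ℕ) : k) *
            (MvPowerSeries.coeff pq.1 f * MvPowerSeries.coeff pq.2 g) := by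
    rintro ⟨p, q⟩ hpq
    simp only [Finset.HasAntidiagonal.mem_antidiagonal] at hpq
    have : p j + q j = α j + 1 := by
      have := DFunLike.congr_fun hpq j
      simpa [Finsupp.single_eq_same] using this
    rw [← add_mul, ← Nat.cast_add, this]
  rw [Finset.mul_sum, Finset.sum_congr rfl key, Finset.sum_add_distrib]
  rw [half j f g α]
  have swap2 : ∑ pq ∈ Finset.HasAntidiagonal.antidiagonal (α + Finsupp.single j 1),
      (((pq.2 : σ →₀ ℕ) j : ℕ) : k) *
        (MvPowerSeries.coeff pq.1 f * MvPowerSeries.coeff pq.2 g) =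
      MvPowerSeries.coeff α (pd j g * f) := by
    rw [← half j g f α]
    refine Finset.sum_nbij' Prod.swap Prod.swap ?_ ?_ (by simp) (by simp) ?_
    · rintro ⟨p, q⟩ hpq
      simp only [Finset.HasAntidiagonal.mem_antidiagonal] at hpq ⊢
      rw [add_comm]; exact hpq
    · rintro ⟨p, q⟩ hpq
      simp only [Finset.HasAntidiagonal.mem_antidiagonal] at hpq ⊢
      rw [add_comm]; exact hpq
    · rintro ⟨p, q⟩ _
      simp only [Prod.swap]
      ring
  rw [swap2, mul_comm (pd j g) f]
end
section
variable {σ τ k : Type*} [CommRing k] [Fintype σ] [DecidableEq σ]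

noncomputable def Esub (s : σ → MvPowerSeries τ k) : MvPolynomial σ k →+* MvPowerSeries τ k :=
  MvPolynomial.eval₂Hom (MvPowerSeries.C (σ := τ) (R := k)) s

noncomputable def bnd (σ : Type*) [Fintype σ] (d : ℕ) : σ →₀ ℕ :=
  Finsupp.equivFunOnFinite.symm fun _ => d

noncomputable def Q (d : ℕ) (f : MvPowerSeries σ k) : MvPolynomial σ k :=
  ∑ m ∈ Finset.Iic (bnd σ d), MvPolynomial.monomial m (MvPowerSeries.coeff m f)

lemma mem_Iic_bnd {m : σ →₀ ℕ} {d : ℕ} (h : degw m ≤ d) : m ∈ Finset.Iic (bnd σ d) := by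
  rw [Finset.mem_Iic]
  intro i
  exact le_trans (le_degw m i) h

lemma coeff_Q (d : ℕ) (f : MvPowerSeries σ k) (m : σ →₀ ℕ) :
    MvPolynomial.coeff m (Q d f) =
      if m ∈ Finset.Iic (bnd σ d) then MvPowerSeries.coeff m f else 0 := by
  rw [Q, MvPolynomial.coeff_sum]
  simp_rw [MvPolynomial.coeff_monomial]
  exact Finset.sum_ite_eq' _ m _

lemma coeff_Esub (s : σ → MvPowerSeries τ k) (p : MvPolynomial σ k) (α : τ →₀ ℕ) :
    MvPowerSeries.coeff α (Esub s p) =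
      ∑ m ∈ p.support, MvPolynomial.coeff m p *
        MvPowerSeries.coeff α (Finsupp.prod m fun i e => s i ^ e) := by
  rw [Esub, MvPolynomial.coe_eval₂Hom, MvPolynomial.eval₂_eq, map_sum]
  refine Finset.sum_congr rfl fun m _ => ?_
  rw [MvPowerSeries.coeff_C_mul, Finsupp.prod]

lemma coeff_msubst (s : σ → MvPowerSeries τ k) (f : MvPowerSeries σ k) (α : τ →₀ ℕ) :
    MvPowerSeries.coeff α (msubst s f) =
      ∑ m ∈ Finset.Iic (bnd σ (degw α)), MvPowerSeries.coeff m f *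
        MvPowerSeries.coeff α (Finsupp.prod m fun i e => s i ^ e) := rfl

lemma coeff_Esub_Q (s : σ → MvPowerSeries τ k) (d : ℕ) (f : MvPowerSeries σ k) (α : τ →₀ ℕ) :
    MvPowerSeries.coeff α (Esub s (Q d f)) =
      ∑ m ∈ Finset.Iic (bnd σ d), MvPowerSeries.coeff m f *
        MvPowerSeries.coeff α (Finsupp.prod m fun i e => s i ^ e) := by
  rw [Q, map_sum, map_sum]
  refine Finset.sum_congr rfl fun m _ => ?_
  rw [Esub, MvPolynomial.eval₂Hom_monomial, MvPowerSeries.coeff_C_mul]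

lemma msubst_eq_Esub_Q (s : σ → MvPowerSeries τ k) (f : MvPowerSeries σ k) (α : τ →₀ ℕ) :
    MvPowerSeries.coeff α (msubst s f) =
      MvPowerSeries.coeff α (Esub s (Q (degw α) f)) := by
  rw [coeff_msubst, coeff_Esub_Q]
end
section
variable {σ τ k : Type*} [CommRing k] [Fintype σ] [DecidableEq σ]

lemma coeff_lt_one {g : MvPowerSeries τ k} (hg : MvPowerSeries.constantCoeff (σ := τ) (R := k) g = 0)
    {α : τ →₀ ℕ} (hα : degw α < 1) : MvPowerSeries.coeff α g = 0 := by
  have : α = 0 := degw_eq_zero (by omega)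
  subst this
  rw [MvPowerSeries.coeff_zero_eq_constantCoeff, hg]

lemma coeff_mul_lt {f g : MvPowerSeries τ k} {a b : ℕ}
    (hf : ∀ β : τ →₀ ℕ, degw β < a → MvPowerSeries.coeff β f = 0)
    (hg : ∀ β : τ →₀ ℕ, degw β < b → MvPowerSeries.coeff β g = 0)
    (α : τ →₀ ℕ) (hα : degw α < a + b) : MvPowerSeries.coeff α (f * g) = 0 := by
  classical
  rw [MvPowerSeries.coeff_mul]
  refine Finset.sum_eq_zero fun pq hpq => ?_
  rw [Finset.HasAntidiagonal.mem_antidiagonal] at hpq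
  have hd : degw pq.1 + degw pq.2 = degw α := by rw [← degw_add, hpq]
  by_cases h1 : degw pq.1 < a
  · rw [hf _ h1, zero_mul]
  · rw [hg _ (by omega), mul_zero]

lemma coeff_pow_lt {g : MvPowerSeries τ k} (hg : MvPowerSeries.constantCoeff (σ := τ) (R := k) g = 0)
    (e : ℕ) : ∀ α : τ →₀ ℕ, degw α < e → MvPowerSeries.coeff α (g ^ e) = 0 := by
  induction e with
  | zero => intro α hα; omega
  | succ e ih =>
    intro α hα
    rw [pow_succ]
    exact coeff_mul_lt ih (fun β hβ => coeff_lt_one hg hβ) α (by omega)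

lemma coeff_prod_lt {s : σ → MvPowerSeries τ k}
    (hs : ∀ i, MvPowerSeries.constantCoeff (σ := τ) (R := k) (s i) = 0) (m : σ →₀ ℕ)
    (α : τ →₀ ℕ) (hα : degw α < degw m) :
    MvPowerSeries.coeff α (Finsupp.prod m fun i e => s i ^ e) = 0 := by
  classical
  have key : ∀ t : Finset σ, ∀ α : τ →₀ ℕ, degw α < ∑ i ∈ t, m i →
      MvPowerSeries.coeff α (∏ i ∈ t, s i ^ m i) = 0 := by
    intro t
    induction t using Finset.cons_induction with
    | empty => intro α hα; simp at hα
    | cons a t ha ih =>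
      intro α hα
      rw [Finset.prod_cons]
      rw [Finset.sum_cons] at hα
      exact coeff_mul_lt (coeff_pow_lt (hs a) (m a)) ih α hα
  exact key m.support α hα

lemma coeff_Esub_stable {s : σ → MvPowerSeries τ k}
    (hs : ∀ i, MvPowerSeries.constantCoeff (σ := τ) (R := k) (s i) = 0) {p : MvPolynomial σ k} {d : ℕ}
    (hp : ∀ m : σ →₀ ℕ, degw m ≤ d → MvPolynomial.coeff m p = 0)
    (α : τ →₀ ℕ) (hα : degw α ≤ d) : MvPowerSeries.coeff α (Esub s p) = 0 := by
  rw [coeff_Esub]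
  refine Finset.sum_eq_zero fun m hm => ?_
  by_cases hdm : degw m ≤ d
  · rw [hp m hdm, zero_mul]
  · rw [coeff_prod_lt hs m α (by omega), mul_zero]

lemma coeff_Esub_congr {s : σ → MvPowerSeries τ k}
    (hs : ∀ i, MvPowerSeries.constantCoeff (σ := τ) (R := k) (s i) = 0) {p q : MvPolynomial σ k} {d : ℕ}
    (hpq : ∀ m : σ →₀ ℕ, degw m ≤ d → MvPolynomial.coeff m p = MvPolynomial.coeff m q)
    (α : τ →₀ ℕ) (hα : degw α ≤ d) :
    MvPowerSeries.coeff α (Esub s p) = MvPowerSeries.coeff α (Esub s q) := by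
  have h0 : MvPowerSeries.coeff α (Esub s (p - q)) = 0 := by
    refine coeff_Esub_stable hs (fun m hm => ?_) α hα
    rw [MvPolynomial.coeff_sub, hpq m hm, sub_self]
  rw [map_sub, map_sub, sub_eq_zero] at h0
  exact h0
end
section
variable {σ τ k : Type*} [CommRing k] [Fintype σ] [DecidableEq σ]

lemma chainE (s : σ → MvPowerSeries τ k) (j : τ) (p : MvPolynomial σ k) :
    pd j (Esub s p) = ∑ i : σ, Esub s (MvPolynomial.pderiv i p) * pd j (s i) := by
  induction p using MvPolynomial.induction_on with
  | C a =>
    rw [show Esub s (MvPolynomial.C a) = MvPowerSeries.C (σ := τ) (R := k) a from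
      MvPolynomial.eval₂Hom_C _ _ _, pd_C]
    simp [MvPolynomial.pderiv_C]
  | add p q hp hq =>
    rw [map_add, pd_add, hp, hq, ← Finset.sum_add_distrib]
    refine Finset.sum_congr rfl fun i _ => ?_
    simp only [map_add]
    ring
  | mul_X p i0 hp =>
    rw [map_mul, show Esub s (MvPolynomial.X i0) = s i0 from
      MvPolynomial.eval₂Hom_X' _ _ _, pd_mul, hp]
    have expand : ∀ i : σ,
        Esub s (MvPolynomial.pderiv i (p * MvPolynomial.X i0)) * pd j (s i) =
          Esub s (MvPolynomial.pderiv i p) * pd j (s i) * s i0 +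
            (if i = i0 then Esub s p * pd j (s i) else 0) := by
      intro i
      rw [MvPolynomial.pderiv_mul, map_add, map_mul, map_mul, add_mul,
        show Esub s (MvPolynomial.X i0) = s i0 from MvPolynomial.eval₂Hom_X' _ _ _]
      congr 1
      · ring
      · by_cases h : i = i0
        · subst h
          rw [MvPolynomial.pderiv_X_self, map_one, mul_one, if_pos rfl]
        · rw [MvPolynomial.pderiv_X_of_ne (Ne.symm h), map_zero, mul_zero, zero_mul,
            if_neg h]
    rw [Finset.sum_congr rfl fun i _ => expand i, Finset.sum_add_distrib,
      Finset.sum_ite_eq' Finset.univ i0 (fun i => Esub s p * pd j (s i)),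
      if_pos (Finset.mem_univ i0), ← Finset.sum_mul]
end
section
variable {σ τ k : Type*} [CommRing k] [Fintype σ] [DecidableEq σ]

lemma coeff_pderiv (i : σ) (p : MvPolynomial σ k) (m : σ →₀ ℕ) :
    MvPolynomial.coeff m (MvPolynomial.pderiv i p) =
      ((m i + 1 : ℕ) : k) * MvPolynomial.coeff (m + Finsupp.single i 1) p := by
  induction p using MvPolynomial.induction_on' with
  | monomial u a =>
    rw [MvPolynomial.pderiv_monomial, MvPolynomial.coeff_monomial,
      MvPolynomial.coeff_monomial]
    by_cases h : u = m + Finsupp.single i 1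
    · subst h
      rw [if_pos rfl, if_pos (by rw [add_tsub_cancel_right])]
      push_cast
      simp [Finsupp.single_eq_same]
      ring
    · rw [if_neg h]
      by_cases h2 : u - Finsupp.single i 1 = m
      · rw [if_pos h2]
        have hui : u i = 0 := by
          by_contra hne
          apply h
          have hle : Finsupp.single i 1 ≤ u := by rw [Finsupp.single_le_iff]; omega
          rw [← h2, tsub_add_cancel_of_le hle]
        simp [hui]
      · rw [if_neg h2, mul_zero]
  | add p q hp hq =>
    rw [map_add, MvPolynomial.coeff_add, MvPolynomial.coeff_add, hp, hq, mul_add]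

lemma chain_msubst {s : σ → MvPowerSeries τ k}
    (hs : ∀ i, MvPowerSeries.constantCoeff (σ := τ) (R := k) (s i) = 0) (j : τ) (f : MvPowerSeries σ k) :
    pd j (msubst s f) = ∑ i : σ, msubst s (pd i f) * pd j (s i) := by
  classical
  ext α
  have h1 : degw (α + Finsupp.single j 1) = degw α + 1 := by rw [degw_add, degw_single]
  have hLHS : MvPowerSeries.coeff α (pd j (msubst s f)) =
      MvPowerSeries.coeff α (pd j (Esub s (Q (degw α + 1) f))) := by
    rw [coeff_pd, coeff_pd, msubst_eq_Esub_Q, h1]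
  rw [hLHS, chainE, map_sum, map_sum]
  refine Finset.sum_congr rfl fun i _ => ?_
  rw [MvPowerSeries.coeff_mul, MvPowerSeries.coeff_mul]
  refine Finset.sum_congr rfl fun bg hbg => ?_
  rw [Finset.HasAntidiagonal.mem_antidiagonal] at hbg
  have hβ : degw bg.1 ≤ degw α := by
    rw [← hbg, degw_add]; omega
  congr 1
  rw [msubst_eq_Esub_Q]
  refine coeff_Esub_congr hs (fun m hm => ?_) bg.1 le_rfl
  rw [coeff_pderiv, coeff_Q, coeff_Q]
  rw [if_pos (mem_Iic_bnd (by rw [degw_add, degw_single]; omega)),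
    if_pos (mem_Iic_bnd hm), coeff_pd]
end

/-- computation in the proof of Corollary 5.2: let
`F ∈ k[[X,Y,Z,b,t]]` (variables `inl 0 = X, inl 1 = Y, inl 2 = Z, inl 3 = b`) and let a
component of `{F = F'_Z = 0}` be parameterized by `(u,b,t) ↦ (uⁿ, Y_i, Z_i, b, t)`
(`u = inl 0`, `b = inl 1` in the source).  If along this parameterization also `F'_Y = 0`,
then `F'_b = 0`, `F'_{t_j} = 0` for all `j`, and `F'_X = 0` along it; hence
`{F = F'_Z = F'_Y = 0, X ≠ 0}` is contained in the singular locus of `F`. -/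
theorem singular_locus_containment {l : ℕ} {k : Type*} [Field k] [CharZero k] [IsAlgClosed k]
    (n : ℕ) (hn : 1 ≤ n) (F : MvPowerSeries (Fin 4 ⊕ Fin l) k)
    (Yi Zi : MvPowerSeries (Fin 2 ⊕ Fin l) k)
    (hY0 : MvPowerSeries.constantCoeff Yi = 0)
    (hZ0 : MvPowerSeries.constantCoeff Zi = 0)
    (hF : msubst (Sum.elim ![MvPowerSeries.X (Sum.inl 0) ^ n, Yi, Zi,
        MvPowerSeries.X (Sum.inl 1)] (fun j => MvPowerSeries.X (Sum.inr j))) F = 0)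
    (hFZ : msubst (Sum.elim ![MvPowerSeries.X (Sum.inl 0) ^ n, Yi, Zi,
        MvPowerSeries.X (Sum.inl 1)] (fun j => MvPowerSeries.X (Sum.inr j)))
      (pd (Sum.inl 2) F) = 0)
    (hFY : msubst (Sum.elim ![MvPowerSeries.X (Sum.inl 0) ^ n, Yi, Zi,
        MvPowerSeries.X (Sum.inl 1)] (fun j => MvPowerSeries.X (Sum.inr j)))
      (pd (Sum.inl 1) F) = 0) :
    msubst (Sum.elim ![MvPowerSeries.X (Sum.inl 0) ^ n, Yi, Zi,
        MvPowerSeries.X (Sum.inl 1)] (fun j => MvPowerSeries.X (Sum.inr j)))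
      (pd (Sum.inl 3) F) = 0 ∧
    (∀ j : Fin l, msubst (Sum.elim ![MvPowerSeries.X (Sum.inl 0) ^ n, Yi, Zi,
        MvPowerSeries.X (Sum.inl 1)] (fun j' => MvPowerSeries.X (Sum.inr j')))
      (pd (Sum.inr j) F) = 0) ∧
    msubst (Sum.elim ![MvPowerSeries.X (Sum.inl 0) ^ n, Yi, Zi,
        MvPowerSeries.X (Sum.inl 1)] (fun j => MvPowerSeries.X (Sum.inr j)))
      (pd (Sum.inl 0) F) = 0 := by
  classical
  set s : (Fin 4 ⊕ Fin l) → MvPowerSeries (Fin 2 ⊕ Fin l) k :=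
    Sum.elim ![MvPowerSeries.X (Sum.inl 0) ^ n, Yi, Zi, MvPowerSeries.X (Sum.inl 1)]
      (fun j => MvPowerSeries.X (Sum.inr j)) with hs_def
  have e0 : s (Sum.inl 0) = MvPowerSeries.X (Sum.inl 0) ^ n := rfl
  have e1 : s (Sum.inl 1) = Yi := rfl
  have e2 : s (Sum.inl 2) = Zi := rfl
  have e3 : s (Sum.inl 3) = MvPowerSeries.X (Sum.inl 1) := rfl
  have er : ∀ j : Fin l, s (Sum.inr j) = MvPowerSeries.X (Sum.inr j) := fun j => rfl
  have hs0 : ∀ i, MvPowerSeries.constantCoeff (σ := Fin 2 ⊕ Fin l) (R := k) (s i) = 0 := by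
    rintro (i | j)
    · fin_cases i
      · show MvPowerSeries.constantCoeff (R := k) (s (Sum.inl 0)) = 0
        rw [e0, map_pow, MvPowerSeries.constantCoeff_X, zero_pow (by omega : n ≠ 0)]
      · show MvPowerSeries.constantCoeff (R := k) (s (Sum.inl 1)) = 0
        rw [e1]; exact hY0
      · show MvPowerSeries.constantCoeff (R := k) (s (Sum.inl 2)) = 0
        rw [e2]; exact hZ0
      · show MvPowerSeries.constantCoeff (R := k) (s (Sum.inl 3)) = 0
        rw [e3, MvPowerSeries.constantCoeff_X]
    · rw [er, MvPowerSeries.constantCoeff_X]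
  have key : ∀ j : Fin 2 ⊕ Fin l,
      ∑ i : Fin 4 ⊕ Fin l, msubst s (pd i F) * pd j (s i) = 0 := by
    intro j
    rw [← chain_msubst hs0 j F, hF, pd_zero]
  have expand : ∀ j : Fin 2 ⊕ Fin l, ∑ i : Fin 4 ⊕ Fin l, msubst s (pd i F) * pd j (s i)
      = msubst s (pd (Sum.inl 0) F) * pd j (MvPowerSeries.X (Sum.inl 0) ^ n)
        + msubst s (pd (Sum.inl 1) F) * pd j Yi
        + msubst s (pd (Sum.inl 2) F) * pd j Zi
        + msubst s (pd (Sum.inl 3) F) * pd j (MvPowerSeries.X (Sum.inl 1))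
        + ∑ j' : Fin l, msubst s (pd (Sum.inr j') F) * pd j (MvPowerSeries.X (Sum.inr j')) := by
    intro j
    rw [Fintype.sum_sum_type, Fin.sum_univ_four, e0, e1, e2, e3]
    simp_rw [er]
  have hb : msubst s (pd (Sum.inl 3) F) = 0 := by
    have h := key (Sum.inl 1)
    rw [expand] at h
    have hsum : ∑ j' : Fin l, msubst s (pd (Sum.inr j') F) *
        pd (Sum.inl 1 : Fin 2 ⊕ Fin l) (MvPowerSeries.X (Sum.inr j')) = 0 :=
      Finset.sum_eq_zero fun j' _ => by rw [pd_X_ne (by simp), mul_zero]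
    rw [hFY, hFZ, hsum, pd_X_pow_ne (show (Sum.inl 1 : Fin 2 ⊕ Fin l) ≠ Sum.inl 0 by simp) n,
      pd_X_self] at h
    simpa using h
  have ht : ∀ j0 : Fin l, msubst s (pd (Sum.inr j0) F) = 0 := by
    intro j0
    have h := key (Sum.inr j0)
    rw [expand] at h
    have hsum : ∑ j' : Fin l, msubst s (pd (Sum.inr j') F) *
        pd (Sum.inr j0 : Fin 2 ⊕ Fin l) (MvPowerSeries.X (Sum.inr j')) =
        msubst s (pd (Sum.inr j0) F) := by
      rw [Finset.sum_eq_single j0]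
      · rw [pd_X_self, mul_one]
      · intro j' _ hne
        rw [pd_X_ne (by simp only [ne_eq, Sum.inr.injEq]; exact Ne.symm hne), mul_zero]
      · intro hmem; exact absurd (Finset.mem_univ j0) hmem
    rw [hFY, hFZ, hsum, pd_X_pow_ne (show (Sum.inr j0 : Fin 2 ⊕ Fin l) ≠ Sum.inl 0 by simp) n,
      pd_X_ne (show (Sum.inr j0 : Fin 2 ⊕ Fin l) ≠ Sum.inl 1 by simp)] at h
    simpa using h
  have hu : msubst s (pd (Sum.inl 0) F) = 0 := by
    have h := key (Sum.inl 0)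
    rw [expand] at h
    have hsum : ∑ j' : Fin l, msubst s (pd (Sum.inr j') F) *
        pd (Sum.inl 0 : Fin 2 ⊕ Fin l) (MvPowerSeries.X (Sum.inr j')) = 0 :=
      Finset.sum_eq_zero fun j' _ => by rw [pd_X_ne (by simp), mul_zero]
    rw [hFY, hFZ, hsum, pd_X_pow_self (Sum.inl 0 : Fin 2 ⊕ Fin l) hn,
      pd_X_ne (show (Sum.inl 0 : Fin 2 ⊕ Fin l) ≠ Sum.inl 1 by simp)] at h
    simp only [zero_mul, mul_zero, add_zero, zero_add] at h
    have hnz : ((n : MvPowerSeries (Fin 2 ⊕ Fin l) k) *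
        MvPowerSeries.X (Sum.inl 0) ^ (n - 1)) ≠ 0 := by
      intro hzero
      have hc := congrArg
        (MvPowerSeries.coeff (Finsupp.single (Sum.inl 0 : Fin 2 ⊕ Fin l) (n - 1))) hzero
      rw [show ((n : MvPowerSeries (Fin 2 ⊕ Fin l) k)) =
          MvPowerSeries.C (σ := Fin 2 ⊕ Fin l) (R := k) (n : k) from (map_natCast _ n).symm,
        MvPowerSeries.coeff_C_mul, MvPowerSeries.X_pow_eq,
        MvPowerSeries.coeff_monomial_same, mul_one, map_zero] at hc
      exact (Nat.cast_ne_zero (R := k)).mpr (by omega) hc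
    rcases mul_eq_zero.mp h with h' | h'
    · exact h'
    · exact absurd h' hnz
  exact ⟨hb, ht, hu⟩
end
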